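/- Let f : {q ∈ ℝ³ : q_x > 0 and q_y > 0} → ℝ³ be the central projection onto the view screen, f(q) = q / (q_x + q_y). Then for any two points p and r in the domain, the image under f of the line segment from p to r is exactly the line segment from f(p) to f(r). In particular, any line segment whose horizontal projection does not cross the north–south or east–west axis through the viewpoint appears as a line segment in the projection onto the view screen. -/

import Mathlib

/-!
STATEMENT 9: Let f(q) = q/(q_x + q_y) be the central projection onto the view
screen, defined on the open quadrant {q ∈ ℝ³ : q_x > 0, q_y > 0}. For any two
points p and r in the domain, the image under f of the line segment from p to r
is exactly the line segment from f(p) to f(r).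
-/

/-- The central projection onto the view screen, on the open quadrant
`q_x > 0, q_y > 0` (where `|q_x| + |q_y| = q_x + q_y`). -/
noncomputable def viewProj (q : ℝ × ℝ × ℝ) : ℝ × ℝ × ℝ :=
  (q.1 + q.2.1)⁻¹ • q

lemma viewProj_combo (p r : ℝ × ℝ × ℝ) (a b : ℝ)
    (hSp : p.1 + p.2.1 ≠ 0) (hSr : r.1 + r.2.1 ≠ 0)
    (hD : a * (p.1 + p.2.1) + b * (r.1 + r.2.1) ≠ 0) :
    viewProj (a • p + b • r)
      = (a * (p.1 + p.2.1) / (a * (p.1 + p.2.1) + b * (r.1 + r.2.1))) • viewProj p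
      + (b * (r.1 + r.2.1) / (a * (p.1 + p.2.1) + b * (r.1 + r.2.1))) • viewProj r := by
  have hsum : (a • p + b • r).1 + (a • p + b • r).2.1
      = a * (p.1 + p.2.1) + b * (r.1 + r.2.1) := by
    simp [Prod.smul_def]; ring
  simp only [viewProj, hsum, smul_smul]
  rw [smul_add, smul_smul, smul_smul]
  congr 1 <;> · congr 1; field_simp

/-- The central projection onto the view screen maps line segments within an open
quadrant to line segments: any line segment whose horizontal projection does not
cross the north–south or east–west axis through the viewpoint appears as a line
segment in the projection onto the view screen. -/
theorem segment_projects_to_segment (p r : ℝ × ℝ × ℝ)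
    (hp₁ : 0 < p.1) (hp₂ : 0 < p.2.1) (hr₁ : 0 < r.1) (hr₂ : 0 < r.2.1) :
    viewProj '' segment ℝ p r = segment ℝ (viewProj p) (viewProj r) := by
  have hSp : 0 < p.1 + p.2.1 := add_pos hp₁ hp₂
  have hSr : 0 < r.1 + r.2.1 := add_pos hr₁ hr₂
  ext q
  constructor
  · rintro ⟨x, ⟨a, b, ha, hb, hab, rfl⟩, rfl⟩
    have hpos : 0 < a ∨ 0 < b := by
      by_contra h; push_neg at h
      have : a = 0 := le_antisymm h.1 ha
      have : b = 0 := le_antisymm h.2 hb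
      simp_all
    have hD : 0 < a * (p.1 + p.2.1) + b * (r.1 + r.2.1) := by
      rcases hpos with h | h
      · exact add_pos_of_pos_of_nonneg (mul_pos h hSp) (mul_nonneg hb hSr.le)
      · exact add_pos_of_nonneg_of_pos (mul_nonneg ha hSp.le) (mul_pos h hSr)
    refine ⟨a * (p.1 + p.2.1) / (a * (p.1 + p.2.1) + b * (r.1 + r.2.1)),
            b * (r.1 + r.2.1) / (a * (p.1 + p.2.1) + b * (r.1 + r.2.1)),
            by positivity, by positivity, by field_simp, ?_⟩
    exact (viewProj_combo p r a b hSp.ne' hSr.ne' hD.ne').symm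
  · rintro ⟨a, b, ha, hb, hab, rfl⟩
    have hpos : 0 < a ∨ 0 < b := by
      by_contra h; push_neg at h
      have : a = 0 := le_antisymm h.1 ha
      have : b = 0 := le_antisymm h.2 hb
      simp_all
    set D : ℝ := a / (p.1 + p.2.1) + b / (r.1 + r.2.1) with hDdef
    have hD : 0 < D := by
      rcases hpos with h | h
      · exact add_pos_of_pos_of_nonneg (div_pos h hSp) (div_nonneg hb hSr.le)
      · exact add_pos_of_nonneg_of_pos (div_nonneg ha hSp.le) (div_pos h hSr)
    set a' : ℝ := (a / (p.1 + p.2.1)) / D with ha'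
    set b' : ℝ := (b / (r.1 + r.2.1)) / D with hb'
    refine ⟨a' • p + b' • r, ⟨a', b', by positivity, by positivity, ?_, rfl⟩, ?_⟩
    · rw [ha', hb', ← add_div, hDdef, div_self hD.ne']
    · have h1 : a' * (p.1 + p.2.1) = a / D := by
        rw [ha']; field_simp
      have h2 : b' * (r.1 + r.2.1) = b / D := by
        rw [hb']; field_simp
      have hDen : a' * (p.1 + p.2.1) + b' * (r.1 + r.2.1) = 1 / D := by
        rw [h1, h2]; field_simp; linarith
      have hne : a' * (p.1 + p.2.1) + b' * (r.1 + r.2.1) ≠ 0 := by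
        rw [hDen]; positivity
      rw [viewProj_combo p r a' b' hSp.ne' hSr.ne' hne, h1, h2, ← add_div, hab]
      have e1 : a / D / (1 / D) = a := by field_simp
      have e2 : b / D / (1 / D) = b := by field_simp
      rw [e1, e2]
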